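/- If 0 < ε ≤ 1/2 and t ≥ n²·W/ε and μ(x) ≥ 1/n (where n is the number of vertices and W the maximum edge weight), then (1−ε)·μ(x) ≤ δ_t(x)/t ≤ (1+ε)·μ(x). -/

import Mathlib

open scoped ENNReal

/-- A walk of length `t` in the graph: `t+1` vertices with consecutive ones joined by edges
(edges and vertices may repeat). -/
def IsWalk {n : ℕ} (E : Fin n → Fin n → Prop) {t : ℕ} (p : Fin (t + 1) → Fin n) : Prop :=
  ∀ i : Fin t, E (p i.castSucc) (p i.succ)

/-- The weight of a walk: the sum of its edge weights. -/
def walkWeight {n : ℕ} (w : Fin n → Fin n → ℕ) {t : ℕ} (p : Fin (t + 1) → Fin n) : ℕ :=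
  ∑ i : Fin t, w (p i.castSucc) (p i.succ)
/-- `y` is reachable from `x` (by a path of length ≥ 0). -/
def Reachable {n : ℕ} (E : Fin n → Fin n → Prop) (x y : Fin n) : Prop :=
  ∃ (t : ℕ) (p : Fin (t + 1) → Fin n), IsWalk E p ∧ p 0 = x ∧ p (Fin.last t) = y

/-- The set of mean weights of cycles reachable from `x`. -/
def cycleMeans {n : ℕ} (E : Fin n → Fin n → Prop) (w : Fin n → Fin n → ℕ)
    (x : Fin n) : Set ℝ :=
  {q | ∃ (t : ℕ) (p : Fin (t + 1) → Fin n), 0 < t ∧ IsWalk E p ∧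
    p (Fin.last t) = p 0 ∧ Reachable E x (p 0) ∧ q = (walkWeight w p : ℝ) / t}

/-- `mcm E w x` is `μ(x)`, the minimum mean weight over all cycles reachable from `x`. -/
noncomputable def mcm {n : ℕ} (E : Fin n → Fin n → Prop) (w : Fin n → Fin n → ℕ)
    (x : Fin n) : ℝ :=
  sInf (cycleMeans E w x)
/-- `deltaNat E w t x` is `δ_t(x)`, the minimum weight of all paths of length exactly `t`
starting at `x`. -/
noncomputable def deltaNat {n : ℕ} (E : Fin n → Fin n → Prop) (w : Fin n → Fin n → ℕ)
    (t : ℕ) (x : Fin n) : ℕ :=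
  sInf {c : ℕ | ∃ p : Fin (t + 1) → Fin n, IsWalk E p ∧ p 0 = x ∧ c = walkWeight w p}

namespace MCM

variable {n : ℕ} {E : Fin n → Fin n → Prop} {w : Fin n → Fin n → ℕ} {W : ℕ}

/-- ℕ-indexed walk predicate. -/
def NW (E : Fin n → Fin n → Prop) (t : ℕ) (P : ℕ → Fin n) : Prop :=
  ∀ i, i < t → E (P i) (P (i + 1))

/-- ℕ-indexed walk weight. -/
def nwt (w : Fin n → Fin n → ℕ) (t : ℕ) (P : ℕ → Fin n) : ℕ :=
  ∑ i ∈ Finset.range t, w (P i) (P (i + 1))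

theorem NW.mono {t t' : ℕ} {P : ℕ → Fin n} (h : NW E t P) (hle : t' ≤ t) : NW E t' P :=
  fun i hi => h i (lt_of_lt_of_le hi hle)

theorem toNW {t : ℕ} {p : Fin (t + 1) → Fin n} (h : IsWalk E p) :
    ∃ P : ℕ → Fin n, NW E t P ∧ P 0 = p 0 ∧ P t = p (Fin.last t) ∧
      nwt w t P = walkWeight w p := by
  refine ⟨fun i => p ⟨min i t, Nat.lt_succ_of_le (min_le_right _ _)⟩, ?_, ?_, ?_, ?_⟩
  · intro i hi
    have e1 : (⟨min i t, Nat.lt_succ_of_le (min_le_right _ _)⟩ : Fin (t + 1)) =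
        (⟨i, hi⟩ : Fin t).castSucc := by
      ext; simp [Nat.min_eq_left hi.le]
    have e2 : (⟨min (i + 1) t, Nat.lt_succ_of_le (min_le_right _ _)⟩ : Fin (t + 1)) =
        (⟨i, hi⟩ : Fin t).succ := by
      ext; simp [Nat.min_eq_left hi]
    simp only [e1, e2]
    exact h ⟨i, hi⟩
  · congr 1
  · congr 1; ext; simp [Fin.last]
  · rw [nwt, ← Fin.sum_univ_eq_sum_range
      (fun i => w (p ⟨min i t, Nat.lt_succ_of_le (min_le_right _ _)⟩)
        (p ⟨min (i+1) t, Nat.lt_succ_of_le (min_le_right _ _)⟩)) t]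
    apply Finset.sum_congr rfl
    intro i _
    congr 1 <;> · apply congrArg; ext; simp [Nat.min_eq_left i.isLt.le, Nat.min_eq_left i.isLt]

theorem ofNW {t : ℕ} {P : ℕ → Fin n} (h : NW E t P) :
    IsWalk E (fun m : Fin (t + 1) => P m.val) :=
  fun i => h i.val i.isLt

theorem walkWeight_ofNW {t : ℕ} {P : ℕ → Fin n} :
    walkWeight w (fun m : Fin (t + 1) => P m.val) = nwt w t P :=
  Fin.sum_univ_eq_sum_range (fun i => w (P i) (P (i + 1))) t

theorem reachable_refl (x : Fin n) : Reachable E x x :=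
  ⟨0, fun _ => x, fun i => i.elim0, rfl, rfl⟩

theorem reachable_of_NW {t : ℕ} {P : ℕ → Fin n} (h : NW E t P) :
    Reachable E (P 0) (P t) :=
  ⟨t, fun m => P m.val, ofNW h, rfl, rfl⟩

theorem NW.append {s u : ℕ} {P Q : ℕ → Fin n} (hP : NW E s P) (hQ : NW E u Q)
    (hPQ : P s = Q 0) :
    ∃ R : ℕ → Fin n, NW E (s + u) R ∧ R 0 = P 0 ∧ R (s + u) = Q u ∧
      nwt w (s + u) R = nwt w s P + nwt w u Q := by
  classical
  set R : ℕ → Fin n := fun m => if m < s then P m else Q (m - s) with hRdef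
  have hR2 : ∀ m, s ≤ m → R m = Q (m - s) := fun m hm => by
    simp [hRdef, Nat.not_lt.mpr hm]
  have hR1 : ∀ m, m ≤ s → R m = P m := by
    intro m hm
    rcases lt_or_eq_of_le hm with h | h
    · simp [hRdef, h]
    · subst h; rw [hR2 m le_rfl, Nat.sub_self, hPQ]
  refine ⟨R, ?_, hR1 0 (Nat.zero_le _), ?_, ?_⟩
  · intro i hi
    rcases Nat.lt_or_ge i s with h | h
    · rw [hR1 i h.le, hR1 (i + 1) h]
      exact hP i h
    · rw [hR2 i h, hR2 (i + 1) (by omega), show i + 1 - s = (i - s) + 1 by omega]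
      exact hQ (i - s) (by omega)
  · rw [hR2 (s + u) (by omega), Nat.add_sub_cancel_left]
  · rw [nwt, Finset.sum_range_add]
    congr 1
    · apply Finset.sum_congr rfl
      intro i hi
      have hi' := Finset.mem_range.mp hi
      rw [hR1 i hi'.le, hR1 (i + 1) hi']
    · apply Finset.sum_congr rfl
      intro i _
      rw [hR2 (s + i) (by omega), hR2 (s + i + 1) (by omega),
        Nat.add_sub_cancel_left, show s + i + 1 - s = i + 1 by omega]

theorem reachable_trans {x y z : Fin n} (h1 : Reachable E x y) (h2 : Reachable E y z) :
    Reachable E x z := by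
  obtain ⟨s, p, hp, hp0, hps⟩ := h1
  obtain ⟨u, q, hq, hq0, hqu⟩ := h2
  obtain ⟨P, hP, hP0, hPs, -⟩ := toNW (w := fun _ _ => 0) hp
  obtain ⟨Q, hQ, hQ0, hQu, -⟩ := toNW (w := fun _ _ => 0) hq
  obtain ⟨R, hR, hR0, hRsu, -⟩ := NW.append (w := fun _ _ => 0) hP hQ (by rw [hPs, hQ0, hps, hq0])
  exact ⟨s + u, fun m => R m.val, ofNW hR, by show R 0 = x; rw [hR0, hP0, hp0],
    by show R ((Fin.last (s+u)).val) = z; rw [show (Fin.last (s+u)).val = s + u from rfl, hRsu, hQu, hqu]⟩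

theorem reachable_prefix {x : Fin n} {t : ℕ} {P : ℕ → Fin n} (h : NW E t P)
    (hx : Reachable E x (P 0)) {i : ℕ} (hi : i ≤ t) : Reachable E x (P i) :=
  reachable_trans hx (reachable_of_NW (h.mono hi))

theorem exists_repeat (P : ℕ → Fin n) : ∃ i j, i < j ∧ j ≤ n ∧ P i = P j := by
  have hcard : Fintype.card (Fin n) < Fintype.card (Fin (n + 1)) := by simp
  obtain ⟨a, b, hab, he⟩ :=
    Fintype.exists_ne_map_eq_of_card_lt (fun k : Fin (n + 1) => P k.val) hcard
  rcases lt_or_gt_of_ne hab with h | h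
  · exact ⟨a.val, b.val, h, Nat.lt_succ_iff.mp b.isLt, he⟩
  · exact ⟨b.val, a.val, h, Nat.lt_succ_iff.mp a.isLt, he.symm⟩

theorem splice {t i j : ℕ} {P : ℕ → Fin n} (hP : NW E t P) (hij : i < j) (hjt : j ≤ t)
    (he : P i = P j) :
    ∃ Q : ℕ → Fin n, NW E (t - (j - i)) Q ∧ Q 0 = P 0 ∧ Q (t - (j - i)) = P t ∧
      nwt w (t - (j - i)) Q + ∑ m ∈ Finset.Ico i j, w (P m) (P (m + 1)) = nwt w t P := by
  classical
  set d := j - i with hd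
  set Q : ℕ → Fin n := fun m => if m < i then P m else P (m + d) with hQdef
  have hQ2 : ∀ m, i ≤ m → Q m = P (m + d) := fun m hm => by
    simp [hQdef, Nat.not_lt.mpr hm]
  have hQ1 : ∀ m, m ≤ i → Q m = P m := by
    intro m hm
    rcases lt_or_eq_of_le hm with h | h
    · simp [hQdef, h]
    · subst h; rw [hQ2 m le_rfl, show m + d = j by omega, ← he]
  refine ⟨Q, ?_, hQ1 0 (Nat.zero_le _), ?_, ?_⟩
  · intro m hm
    rcases Nat.lt_or_ge m i with h | h
    · rw [hQ1 m h.le, hQ1 (m + 1) h]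
      exact hP m (by omega)
    · rw [hQ2 m h, hQ2 (m + 1) (by omega), show m + 1 + d = (m + d) + 1 by omega]
      exact hP (m + d) (by omega)
  · rw [hQ2 (t - d) (by omega), show t - d + d = t by omega]
  · have hsplit : t - d = i + (t - j) := by omega
    rw [nwt, hsplit, Finset.sum_range_add]
    have e1 : ∑ m ∈ Finset.range i, w (Q m) (Q (m + 1)) =
        ∑ m ∈ Finset.range i, w (P m) (P (m + 1)) := by
      apply Finset.sum_congr rfl
      intro m hm
      have hm' := Finset.mem_range.mp hm
      rw [hQ1 m hm'.le, hQ1 (m + 1) hm']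
    have e2 : ∑ m ∈ Finset.range (t - j), w (Q (i + m)) (Q (i + m + 1)) =
        ∑ m ∈ Finset.Ico j t, w (P m) (P (m + 1)) := by
      rw [Finset.sum_Ico_eq_sum_range]
      apply Finset.sum_congr rfl
      intro m _
      rw [hQ2 (i + m) (by omega), hQ2 (i + m + 1) (by omega),
        show i + m + d = j + m by omega, show i + m + 1 + d = j + m + 1 by omega]
    rw [e1, e2, nwt, Finset.range_eq_Ico, Finset.range_eq_Ico,
      ← Finset.sum_Ico_consecutive _ (Nat.zero_le j) hjt,
      ← Finset.sum_Ico_consecutive _ (Nat.zero_le i) hij.le,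
      ← Finset.range_eq_Ico]
    ring

theorem mem_cycleMeans_of_NW {x : Fin n} {c : ℕ} {P : ℕ → Fin n} (hc : 0 < c)
    (h : NW E c P) (hcy : P c = P 0) (hr : Reachable E x (P 0)) :
    ((nwt w c P : ℝ) / c) ∈ cycleMeans E w x := by
  refine ⟨c, fun m => P m.val, hc, ofNW h, ?_, hr, ?_⟩
  · show P ((Fin.last c).val) = P 0
    rw [show (Fin.last c).val = c from rfl, hcy]
  · rw [walkWeight_ofNW]

theorem cycleMeans_nonneg {x : Fin n} : ∀ q ∈ cycleMeans E w x, (0 : ℝ) ≤ q := by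
  rintro q ⟨t, p, ht, -, -, -, rfl⟩
  positivity

theorem mcm_bddBelow (x : Fin n) : BddBelow (cycleMeans E w x) :=
  ⟨0, fun _ hq => cycleMeans_nonneg _ hq⟩

theorem nwt_le_W (hW : ∀ a b, E a b → w a b ≤ W) {t : ℕ} {P : ℕ → Fin n}
    (h : NW E t P) : nwt w t P ≤ t * W := by
  calc nwt w t P ≤ ∑ _i ∈ Finset.range t, W :=
        Finset.sum_le_sum fun i hi => hW _ _ (h i (Finset.mem_range.mp hi))
    _ = t * W := by simp [mul_comm]

theorem lower_bound {x : Fin n} (hne : (cycleMeans E w x).Nonempty) :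
    ∀ t P, NW E t P → Reachable E x (P 0) → ((t : ℝ) - n) * mcm E w x ≤ (nwt w t P : ℝ) := by
  have h0 : 0 ≤ mcm E w x := le_csInf hne cycleMeans_nonneg
  intro t
  induction t using Nat.strong_induction_on with
  | _ t IH =>
    intro P hP hreach
    by_cases hlt : t < n
    · have h1 : ((t : ℝ) - n) ≤ 0 := by
        have : (t : ℝ) ≤ n := Nat.cast_le.mpr hlt.le
        linarith
      have h2 : (0:ℝ) ≤ (nwt w t P : ℝ) := Nat.cast_nonneg _
      nlinarith
    · push_neg at hlt
      obtain ⟨i, j, hij, hjn, he⟩ := exists_repeat P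
      have hjt : j ≤ t := le_trans hjn hlt
      obtain ⟨Q, hQ, hQ0, -, hwq⟩ := splice (w := w) hP hij hjt he
      set d := j - i with hd
      have hd1 : 1 ≤ d := by omega
      have hshift : NW E d (fun m => P (i + m)) := by
        intro m hm
        have := hP (i + m) (by omega)
        rw [show i + m + 1 = i + (m + 1) by omega] at this
        exact this
      have hcyc2 : (fun m => P (i + m)) d = (fun m => P (i + m)) 0 := by
        show P (i + d) = P (i + 0)
        rw [show i + d = j by omega, show i + 0 = i from rfl, ← he]
      have hr2 : Reachable E x ((fun m => P (i + m)) 0) := by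
        show Reachable E x (P (i + 0))
        rw [show i + 0 = i from rfl]
        exact reachable_prefix hP hreach (le_trans hij.le hjt)
      have hmem := mem_cycleMeans_of_NW (w := w) hd1 hshift hcyc2 hr2
      have hweq : nwt w d (fun m => P (i + m)) = ∑ m ∈ Finset.Ico i j, w (P m) (P (m + 1)) := by
        rw [Finset.sum_Ico_eq_sum_range, show j - i = d from rfl, nwt]
        apply Finset.sum_congr rfl
        intro m _
        rw [show i + m + 1 = i + (m + 1) by omega]
      rw [hweq] at hmem
      set segw := ∑ m ∈ Finset.Ico i j, w (P m) (P (m + 1)) with hsegw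
      have hmu_le : mcm E w x ≤ (segw : ℝ) / d := csInf_le (mcm_bddBelow x) hmem
      have hdpos : (0:ℝ) < (d:ℝ) := by exact_mod_cast hd1
      have hdseg : (d : ℝ) * mcm E w x ≤ (segw : ℝ) := by
        rw [le_div_iff₀ hdpos] at hmu_le
        linarith
      have hIH := IH (t - d) (by omega) Q hQ (by rw [hQ0]; exact hreach)
      have hcast : ((t - d : ℕ) : ℝ) = (t : ℝ) - d := by
        have : d ≤ t := by omega
        push_cast [this]
        ring
      rw [hcast] at hIH
      have hwR : (nwt w (t - d) Q : ℝ) + (segw : ℝ) = (nwt w t P : ℝ) := by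
        exact_mod_cast congrArg (Nat.cast : ℕ → ℝ) hwq
      have hid : ((t : ℝ) - n) * mcm E w x =
          (((t : ℝ) - d) - n) * mcm E w x + d * mcm E w x := by ring
      linarith

theorem shorten (hn : 0 < n) :
    ∀ t (P : ℕ → Fin n), NW E t P → ∃ s Q, s < n ∧ NW E s Q ∧ Q 0 = P 0 ∧ Q s = P t := by
  intro t
  induction t using Nat.strong_induction_on with
  | _ t IH =>
    intro P hP
    by_cases hlt : t < n
    · exact ⟨t, P, hlt, hP, rfl, rfl⟩
    · push_neg at hlt
      obtain ⟨i, j, hij, hjn, he⟩ := exists_repeat P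
      obtain ⟨Q, hQ, hQ0, hQt, -⟩ := splice (w := fun _ _ => 0) hP hij (hjn.trans hlt) he
      obtain ⟨s, R, hs, hR, hR0, hRs⟩ := IH (t - (j - i)) (by omega) Q hQ
      exact ⟨s, R, hs, hR, hR0.trans hQ0, hRs.trans hQt⟩

def SC (E : Fin n → Fin n → Prop) (w : Fin n → Fin n → ℕ) (x : Fin n) : Set ℝ :=
  {q | ∃ (c : ℕ) (P : ℕ → Fin n), 1 ≤ c ∧ c ≤ n ∧ NW E c P ∧ P c = P 0 ∧
    Reachable E x (P 0) ∧ q = (nwt w c P : ℝ) / c}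

theorem SC_subset {x : Fin n} : SC E w x ⊆ cycleMeans E w x := by
  rintro q ⟨c, P, hc1, -, hNW, hcy, hr, rfl⟩
  exact mem_cycleMeans_of_NW hc1 hNW hcy hr

theorem SC_finite {x : Fin n} (hW : ∀ a b, E a b → w a b ≤ W) : (SC E w x).Finite := by
  apply Set.Finite.subset (Set.Finite.image (fun p : ℕ × ℕ => (p.1 : ℝ) / p.2)
    ((Set.finite_Iic (n * W)).prod (Set.finite_Iic n)))
  rintro q ⟨c, P, hc1, hcn, hNW, -, -, rfl⟩
  exact ⟨(nwt w c P, c),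
    ⟨le_trans (nwt_le_W hW hNW) (Nat.mul_le_mul_right _ hcn), hcn⟩, rfl⟩

theorem exists_SC_le (x : Fin n) :
    ∀ t P, 0 < t → NW E t P → P t = P 0 → Reachable E x (P 0) →
      ∃ s ∈ SC E w x, s ≤ (nwt w t P : ℝ) / t := by
  intro t
  induction t using Nat.strong_induction_on with
  | _ t IH =>
    intro P ht hP hcy hr
    by_cases hle : t ≤ n
    · exact ⟨_, ⟨t, P, ht, hle, hP, hcy, hr, rfl⟩, le_refl _⟩
    · push_neg at hle
      obtain ⟨i, j, hij, hjn, he⟩ := exists_repeat P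
      have hjt : j ≤ t := by omega
      set d := j - i with hd
      have hd1 : 1 ≤ d := by omega
      have hdn : d ≤ n := by omega
      obtain ⟨Q, hQ, hQ0, hQt, hwq⟩ := splice (w := w) hP hij hjt he
      set segw := ∑ m ∈ Finset.Ico i j, w (P m) (P (m + 1)) with hsegw
      set t' := t - d with ht'
      -- segment as short cycle
      have hshift : NW E d (fun m => P (i + m)) := by
        intro m hm
        have := hP (i + m) (by omega)
        rw [show i + m + 1 = i + (m + 1) by omega] at this
        exact this
      have hcyc2 : (fun m => P (i + m)) d = (fun m => P (i + m)) 0 := by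
        show P (i + d) = P (i + 0)
        rw [show i + d = j by omega, show i + 0 = i from rfl, ← he]
      have hr2 : Reachable E x ((fun m => P (i + m)) 0) := by
        show Reachable E x (P (i + 0))
        rw [show i + 0 = i from rfl]
        exact reachable_prefix hP hr (le_trans hij.le hjt)
      have hweq : nwt w d (fun m => P (i + m)) = segw := by
        rw [hsegw, Finset.sum_Ico_eq_sum_range, show j - i = d from rfl, nwt]
        apply Finset.sum_congr rfl
        intro m _
        rw [show i + m + 1 = i + (m + 1) by omega]
      have hseg_mem : ((segw : ℝ) / d) ∈ SC E w x :=
        ⟨d, fun m => P (i + m), hd1, hdn, hshift, hcyc2, hr2, by rw [hweq]⟩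
      by_cases hcmp : (segw : ℝ) / d ≤ (nwt w t P : ℝ) / t
      · exact ⟨_, hseg_mem, hcmp⟩
      · push_neg at hcmp
        have ht'pos : 0 < t' := by omega
        have ht0 : (0:ℝ) < (t:ℝ) := by exact_mod_cast ht
        have hd0 : (0:ℝ) < (d:ℝ) := by exact_mod_cast hd1
        have ht'0 : (0:ℝ) < (t':ℝ) := by exact_mod_cast ht'pos
        have hm2 : (nwt w t' Q : ℝ) / t' ≤ (nwt w t P : ℝ) / t := by
          have hc' : (nwt w t P : ℝ) * d < (segw : ℝ) * t := (div_lt_div_iff₀ ht0 hd0).mp hcmp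
          have hA : (nwt w t' Q : ℝ) = (nwt w t P : ℝ) - segw := by
            have : (nwt w t' Q : ℝ) + segw = (nwt w t P : ℝ) := by
              exact_mod_cast congrArg (Nat.cast : ℕ → ℝ) hwq
            linarith
          have htt : (t' : ℝ) = (t : ℝ) - d := by
            have h1 : d ≤ t := by omega
            rw [ht']
            push_cast [h1]
            ring
          rw [div_le_div_iff₀ ht'0 ht0, hA, htt]
          nlinarith
        obtain ⟨s, hs, hsle⟩ := IH t' (by omega) Q ht'pos hQ
          (hQt.trans (hcy.trans hQ0.symm)) (by rw [hQ0]; exact hr)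
        exact ⟨s, hs, hsle.trans hm2⟩

theorem mcm_attained {x : Fin n} (hW : ∀ a b, E a b → w a b ≤ W)
    (hne : (cycleMeans E w x).Nonempty) :
    ∃ (c : ℕ) (P : ℕ → Fin n), 1 ≤ c ∧ c ≤ n ∧ NW E c P ∧ P c = P 0 ∧
      Reachable E x (P 0) ∧ (nwt w c P : ℝ) / c = mcm E w x := by
  obtain ⟨q, t, p, ht, hwalk, hcy, hr, hq⟩ := hne
  obtain ⟨P, hP, hP0, hPt, hwt⟩ := toNW (w := w) hwalk
  have hcy' : P t = P 0 := by rw [hPt, hP0, hcy]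
  have hr' : Reachable E x (P 0) := by rw [hP0]; exact hr
  obtain ⟨s, hsS, -⟩ := exists_SC_le x t P ht hP hcy' hr'
  have hfin := SC_finite (x := x) hW
  have hSne : (SC E w x).Nonempty := ⟨s, hsS⟩
  obtain ⟨s₀, hs₀S, hs₀min⟩ : ∃ s₀ ∈ SC E w x, ∀ q ∈ SC E w x, s₀ ≤ q := by
    have hne' := (Set.Finite.toFinset_nonempty hfin).mpr hSne
    exact ⟨hfin.toFinset.min' hne',
      (Set.Finite.mem_toFinset hfin).mp (hfin.toFinset.min'_mem hne'),
      fun q hq => Finset.min'_le _ _ ((Set.Finite.mem_toFinset hfin).mpr hq)⟩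
  have hlow : ∀ q ∈ cycleMeans E w x, s₀ ≤ q := by
    rintro q ⟨u, r, hu, hwr, hcr, hrr, rfl⟩
    obtain ⟨R, hR, hR0, hRu, hwR⟩ := toNW (w := w) hwr
    obtain ⟨s', hs', hle⟩ := exists_SC_le x u R hu hR (by rw [hRu, hR0, hcr])
      (by rw [hR0]; exact hrr)
    calc s₀ ≤ s' := hs₀min s' hs'
      _ ≤ _ := by rwa [hwR] at hle
  have heq : mcm E w x = s₀ :=
    le_antisymm (csInf_le (mcm_bddBelow x) (SC_subset hs₀S))
      (le_csInf ⟨_, ⟨t, p, ht, hwalk, hcy, hr, rfl⟩⟩ hlow)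
  obtain ⟨c, P', h1, h2, h3, h4, h5, h6⟩ := hs₀S
  exact ⟨c, P', h1, h2, h3, h4, h5, by rw [← h6, heq]⟩

theorem cyclic_step {c : ℕ} {P : ℕ → Fin n} (hc : 0 < c) (hcy : P c = P 0) (i : ℕ) :
    P ((i + 1) % c) = P (i % c + 1) := by
  have hmd := Nat.mod_add_div i c
  have hml := Nat.mod_lt i hc
  rcases Nat.lt_or_ge (i % c + 1) c with h | h
  · have he : (i + 1) % c = i % c + 1 := by
      conv_lhs => rw [show i + 1 = (i % c + 1) + c * (i / c) by omega]
      rw [Nat.add_mul_mod_self_left, Nat.mod_eq_of_lt h]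
    rw [he]
  · have h1 : i % c + 1 = c := by omega
    have hexp : c * (i / c + 1) = c * (i / c) + c := by ring
    have he : (i + 1) % c = 0 := by
      conv_lhs => rw [show i + 1 = 0 + c * (i / c + 1) by omega]
      rw [Nat.add_mul_mod_self_left, Nat.zero_mod]
    rw [he, h1, hcy]

theorem cyclic_NW {c : ℕ} {P : ℕ → Fin n} (hc : 0 < c) (hP : NW E c P)
    (hcy : P c = P 0) (L : ℕ) : NW E L (fun m => P (m % c)) := by
  intro i _
  show E (P (i % c)) (P ((i + 1) % c))
  rw [cyclic_step hc hcy i]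
  exact hP (i % c) (Nat.mod_lt i hc)

theorem cyclic_weight {c : ℕ} {P : ℕ → Fin n} (hc : 0 < c) (hcy : P c = P 0) (k : ℕ) :
    nwt w (k * c) (fun m => P (m % c)) = k * nwt w c P := by
  induction k with
  | zero => simp [nwt]
  | succ k IH =>
    rw [show (k + 1) * c = k * c + c by ring, nwt, Finset.sum_range_add]
    have e1 : ∑ i ∈ Finset.range (k * c), w (P (i % c)) (P ((i + 1) % c)) =
        nwt w (k * c) (fun m => P (m % c)) := rfl
    have e2 : ∑ i ∈ Finset.range c, w (P ((k * c + i) % c)) (P ((k * c + i + 1) % c)) =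
        nwt w c P := by
      apply Finset.sum_congr rfl
      intro i hi
      have hi' := Finset.mem_range.mp hi
      have m1 : (k * c + i) % c = i := by
        rw [show k * c + i = c * k + i by ring, Nat.mul_add_mod, Nat.mod_eq_of_lt hi']
      have m2 : (k * c + i + 1) % c = (i + 1) % c := by
        rw [show k * c + i + 1 = c * k + (i + 1) by ring, Nat.mul_add_mod]
      rw [m1, m2, cyclic_step hc hcy i, Nat.mod_eq_of_lt hi']
    show (∑ i ∈ Finset.range (k * c), w (P (i % c)) (P ((i + 1) % c))) +
        ∑ i ∈ Finset.range c, w (P ((k * c + i) % c)) (P ((k * c + i + 1) % c)) =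
        (k + 1) * nwt w c P
    rw [e1, e2, IH]
    ring

theorem delta_lower {x : Fin n} (hout : ∀ v : Fin n, ∃ u : Fin n, E v u)
    (hne : (cycleMeans E w x).Nonempty) (t : ℕ) :
    ((t : ℝ) - n) * mcm E w x ≤ (deltaNat E w t x : ℝ) := by
  have hδset : {c : ℕ | ∃ p : Fin (t+1) → Fin n, IsWalk E p ∧ p 0 = x ∧
      c = walkWeight w p}.Nonempty := by
    choose f hf using hout
    refine ⟨walkWeight w (fun i : Fin (t+1) => f^[i.val] x),
      fun i : Fin (t+1) => f^[i.val] x, ?_, ?_, rfl⟩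
    · intro i
      show E (f^[i.castSucc.val] x) (f^[i.succ.val] x)
      have hsv : i.succ.val = i.castSucc.val + 1 := rfl
      rw [hsv, Function.iterate_succ_apply']
      exact hf _
    · rfl
  obtain ⟨p, hwalkp, hp0, hδ⟩ := Nat.sInf_mem hδset
  have hδ' : deltaNat E w t x = walkWeight w p := hδ
  obtain ⟨P, hP, hP0, -, hwP⟩ := toNW (w := w) hwalkp
  have hreach : Reachable E x (P 0) := by rw [hP0, hp0]; exact reachable_refl x
  have hlow := lower_bound hne t P hP hreach
  rw [hwP] at hlow
  rw [hδ']
  exact hlow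

theorem delta_upper {x : Fin n} (hn : 0 < n) (hW : ∀ a b, E a b → w a b ≤ W)
    (hne : (cycleMeans E w x).Nonempty) {t : ℕ} (htn : n ≤ t) :
    ∃ a c : ℕ, a < n ∧ 1 ≤ c ∧ c ≤ n ∧
      (deltaNat E w t x : ℝ) ≤ (a : ℝ) * W + ((t : ℝ) - a + c) * mcm E w x := by
  have hμ0 : 0 ≤ mcm E w x := le_csInf hne cycleMeans_nonneg
  obtain ⟨c, C, hc1, hcn, hC, hCcy, hCr, hCmean⟩ := mcm_attained hW hne
  obtain ⟨l, pA, hpA, hpA0, hpAl⟩ := hCr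
  obtain ⟨A', hA', hA'0, hA'l, -⟩ := toNW (w := w) hpA
  obtain ⟨a, A, han, hA, hA0, hAa⟩ := shorten hn l A' hA'
  refine ⟨a, c, han, hc1, hcn, ?_⟩
  have hAx : A 0 = x := by rw [hA0, hA'0, hpA0]
  have hAC : A a = C 0 := by rw [hAa, hA'l, hpAl]
  have hat : a ≤ t := le_trans (Nat.le_of_lt han) htn
  set L := t - a with hL
  have hc0 : 0 < c := hc1
  have hmdL := Nat.mod_add_div L c
  have hmlL := Nat.mod_lt L hc0
  have hexp : (L / c + 1) * c = c * (L / c) + c := by ring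
  have hLkc : L ≤ (L / c + 1) * c := by omega
  have hkcL : (L / c + 1) * c ≤ L + c := by omega
  have hNWcy : NW E L (fun m => C (m % c)) := cyclic_NW hc0 hC hCcy L
  have hjoin : A a = (fun m => C (m % c)) 0 := by
    show A a = C (0 % c)
    rw [Nat.zero_mod, hAC]
  obtain ⟨R, hR, hR0, -, hwR⟩ := NW.append (w := w) hA hNWcy hjoin
  have haL : a + L = t := by omega
  rw [haL] at hR hwR
  have hδle : deltaNat E w t x ≤ nwt w t R := by
    apply Nat.sInf_le
    exact ⟨fun m : Fin (t+1) => R m.val, ofNW hR, by show R 0 = x; rw [hR0, hAx],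
      walkWeight_ofNW.symm⟩
  have hwA : nwt w a A ≤ a * W := nwt_le_W hW hA
  have hwcy : nwt w L (fun m => C (m % c)) ≤ (L / c + 1) * nwt w c C := by
    calc nwt w L (fun m => C (m % c))
        ≤ nwt w ((L / c + 1) * c) (fun m => C (m % c)) :=
          Finset.sum_le_sum_of_subset (Finset.range_subset_range.mpr hLkc)
      _ = (L / c + 1) * nwt w c C := cyclic_weight hc0 hCcy (L / c + 1)
  have hδN : deltaNat E w t x ≤ a * W + (L / c + 1) * nwt w c C := by
    refine hδle.trans ?_
    rw [hwR]
    exact Nat.add_le_add hwA hwcy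
  have hc0R : (0:ℝ) < c := by exact_mod_cast hc0
  have hCw : (nwt w c C : ℝ) = mcm E w x * c := by
    rw [← hCmean]
    field_simp
  have hδR : (deltaNat E w t x : ℝ) ≤ (a:ℝ) * W +
      (((L / c + 1) * c : ℕ) : ℝ) * mcm E w x := by
    have h1 : ((deltaNat E w t x : ℕ) : ℝ) ≤ ((a * W + (L / c + 1) * nwt w c C : ℕ) : ℝ) :=
      Nat.cast_le.mpr hδN
    push_cast at h1 ⊢
    rw [hCw] at h1
    linarith
  have hLcast : ((L : ℕ) : ℝ) = (t:ℝ) - a := by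
    rw [hL]
    push_cast [hat]
    ring
  have hkcR : (((L / c + 1) * c : ℕ) : ℝ) ≤ (t:ℝ) - a + c := by
    have h2 : (((L / c + 1) * c : ℕ) : ℝ) ≤ ((L + c : ℕ) : ℝ) := Nat.cast_le.mpr hkcL
    rw [Nat.cast_add, hLcast] at h2
    linarith
  have hkcμ : (((L / c + 1) * c : ℕ) : ℝ) * mcm E w x ≤ ((t:ℝ) - a + c) * mcm E w x :=
    mul_le_mul_of_nonneg_right hkcR hμ0
  linarith

end MCM

open MCM

/-- If `0 < ε ≤ 1/2` and `t ≥ n²·W/ε` and `μ(x) ≥ 1/n`, then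
`(1−ε)·μ(x) ≤ δ_t(x)/t ≤ (1+ε)·μ(x)`. -/
theorem delta_div_t_approx_mcm {n : ℕ} (E : Fin n → Fin n → Prop)
    (w : Fin n → Fin n → ℕ) (hout : ∀ v : Fin n, ∃ u : Fin n, E v u)
    (W : ℕ) (hW : ∀ a b : Fin n, E a b → w a b ≤ W)
    (x : Fin n) (hcyc : (cycleMeans E w x).Nonempty)
    (ε : ℝ) (hε0 : 0 < ε) (hε1 : ε ≤ 1 / 2)
    (hmu : 1 / (n : ℝ) ≤ mcm E w x)
    (t : ℕ) (ht : (n : ℝ) ^ 2 * (W : ℝ) / ε ≤ (t : ℝ)) :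
    (1 - ε) * mcm E w x ≤ (deltaNat E w t x : ℝ) / (t : ℝ) ∧
    (deltaNat E w t x : ℝ) / (t : ℝ) ≤ (1 + ε) * mcm E w x := by
  have hn : 0 < n := x.pos
  have hn0 : (0:ℝ) < n := by exact_mod_cast hn
  have hbdd := mcm_bddBelow (E := E) (w := w) x
  have hμ0 : 0 < mcm E w x := lt_of_lt_of_le (by positivity) hmu
  have hW1 : 1 ≤ W := by
    by_contra hW0
    push_neg at hW0
    have hW0' : W = 0 := by omega
    obtain ⟨q, u, p, hu, hwalk, hcy, hr, hq⟩ := hcyc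
    have hz : walkWeight w p = 0 := by
      apply Finset.sum_eq_zero
      intro i _
      have := hW _ _ (hwalk i)
      omega
    have hmem : (0:ℝ) ∈ cycleMeans E w x := by
      refine ⟨u, p, hu, hwalk, hcy, hr, ?_⟩
      rw [hz]; simp
    have : mcm E w x ≤ 0 := csInf_le hbdd hmem
    linarith
  have hW1R : (1:ℝ) ≤ W := by exact_mod_cast hW1
  have hn1R : (1:ℝ) ≤ n := by exact_mod_cast hn
  have hnW1 : (1:ℝ) ≤ (n:ℝ) * W := by
    nlinarith [mul_nonneg (sub_nonneg.mpr hn1R) (sub_nonneg.mpr hW1R)]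
  have hεt : (n:ℝ)^2 * W ≤ ε * t := by
    rw [div_le_iff₀ hε0] at ht
    linarith
  have hnsq : (n:ℝ) ≤ (n:ℝ)^2 * W := by
    nlinarith [mul_nonneg hn0.le (sub_nonneg.mpr hnW1)]
  have hεtn : (n:ℝ) ≤ ε * t := le_trans hnsq hεt
  have htcast0 : (0:ℝ) ≤ t := Nat.cast_nonneg t
  have hhalf : ε * t ≤ (1/2) * t := mul_le_mul_of_nonneg_right hε1 htcast0
  have h2n : 2 * (n:ℝ) ≤ t := by linarith
  have htpos : (0:ℝ) < t := by linarith
  have htn : n ≤ t := by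
    have h : (n:ℝ) ≤ t := by linarith
    exact_mod_cast h
  have hεμ : (n:ℝ) * mcm E w x ≤ ε * t * mcm E w x :=
    mul_le_mul_of_nonneg_right hεtn hμ0.le
  constructor
  · have hlowδ := delta_lower hout hcyc t
    rw [le_div_iff₀ htpos]
    linarith
  · obtain ⟨a, c, han, hc1, hcn, hδR⟩ := delta_upper hn hW hcyc htn
    have haR : (a:ℝ) ≤ (n:ℝ) - 1 := by
      have h : (a:ℝ) + 1 ≤ n := by exact_mod_cast han
      linarith
    have hcR : (c:ℝ) ≤ n := by exact_mod_cast hcn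
    have hW0R : (0:ℝ) ≤ W := by linarith
    have haWb : (a:ℝ) * W ≤ ((n:ℝ) - 1) * W := mul_le_mul_of_nonneg_right haR hW0R
    have hcμb : (c:ℝ) * mcm E w x ≤ (n:ℝ) * mcm E w x :=
      mul_le_mul_of_nonneg_right hcR hμ0.le
    have haμ : (0:ℝ) ≤ (a:ℝ) * mcm E w x := mul_nonneg (Nat.cast_nonneg a) hμ0.le
    have hnμ1 : (1:ℝ) ≤ (n:ℝ) * mcm E w x := by
      rw [div_le_iff₀ hn0] at hmu
      linarith
    have key : ((n:ℝ) - 1) * W + (n:ℝ) * mcm E w x ≤ (n:ℝ)^2 * W * mcm E w x := by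
      nlinarith [mul_nonneg (sub_nonneg.mpr hnμ1) (sub_nonneg.mpr hnW1)]
    have hεW : (n:ℝ)^2 * W * mcm E w x ≤ ε * t * mcm E w x :=
      mul_le_mul_of_nonneg_right hεt hμ0.le
    rw [div_le_iff₀ htpos]
    linarith [hδR, haWb, hcμb, haμ, key, hεW]
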